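/- Let a > 0 be real, Ω ⊆ ℂ open, h, F holomorphic on Ω with F′ nonvanishing, and let u(x,y,z) = log( 4a·(z+h)(z+h̄)·|F′|² / (1 + a|F|²)² ) on U = {(x,y,z) : x+iy ∈ Ω, z + h(x+iy) ≠ 0}. Then the smooth function κ(x,y,z) = i(h − h̄) / ( 2(z+h)(z+h̄) ) (h evaluated at x+iy) satisfies on U the three equations: κ_x = −(1/2)·u_{yz}, κ_y = (1/2)·u_{xz}, and κ_z + u_z·κ = 0. -/

import Mathlib

/-- Partial derivative in the first variable of a function of three real variables. -/
noncomputable def pdx (f : ℝ → ℝ → ℝ → ℝ) : ℝ → ℝ → ℝ → ℝ :=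
  fun x y z => deriv (fun t => f t y z) x

/-- Partial derivative in the second variable. -/
noncomputable def pdy (f : ℝ → ℝ → ℝ → ℝ) : ℝ → ℝ → ℝ → ℝ :=
  fun x y z => deriv (fun t => f x t z) y

/-- Partial derivative in the third variable. -/
noncomputable def pdz (f : ℝ → ℝ → ℝ → ℝ) : ℝ → ℝ → ℝ → ℝ :=
  fun x y z => deriv (fun t => f x y t) z

lemma hasDerivAt_re_comp {g : ℝ → ℂ} {g' : ℂ} {t : ℝ} (hg : HasDerivAt g g' t) :
    HasDerivAt (fun s => (g s).re) g'.re t := by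
  simpa [Function.comp_def] using Complex.reCLM.hasFDerivAt.comp_hasDerivAt t hg

lemma hasDerivAt_im_comp {g : ℝ → ℂ} {g' : ℂ} {t : ℝ} (hg : HasDerivAt g g' t) :
    HasDerivAt (fun s => (g s).im) g'.im t := by
  simpa [Function.comp_def] using Complex.imCLM.hasFDerivAt.comp_hasDerivAt t hg

lemma hasDerivAt_normSq_comp {g : ℝ → ℂ} {g' : ℂ} {t : ℝ} (hg : HasDerivAt g g' t) :
    HasDerivAt (fun s => Complex.normSq (g s))
      (2*(g t).re*g'.re + 2*(g t).im*g'.im) t := by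
  have h1 := hasDerivAt_re_comp hg
  have h2 := hasDerivAt_im_comp hg
  have h3 := (h1.mul h1).add (h2.mul h2)
  have he : (fun s => Complex.normSq (g s))
      = fun s => (g s).re*(g s).re + (g s).im*(g s).im := by
    funext s; exact Complex.normSq_apply _
  rw [he]; exact h3.congr_deriv (by ring)

/-- for the explicit Toda solution
`u(x,y,z) = log( 4a·(z+h)(z+h̄)·|F′|² / (1 + a|F|²)² )`, the function
`κ = i(h − h̄)/(2(z+h)(z+h̄))` (a real-valued function, expressed as the real part of the
corresponding complex expression) satisfies the hyperCR monopole equations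
`κ_x = −(1/2)u_{yz}`, `κ_y = (1/2)u_{xz}`, `κ_z + u_z·κ = 0` on
`U = {(x,y,z) : x+iy ∈ Ω, z + h(x+iy) ≠ 0}`. -/
theorem hyperCR_monopole_equations_for_toda_solution
    (a : ℝ) (ha : 0 < a)
    (Ω : Set ℂ) (hΩ : IsOpen Ω)
    (h F F' : ℂ → ℂ)
    (hh : DifferentiableOn ℂ h Ω)
    (hF : ∀ ζ ∈ Ω, HasDerivAt F (F' ζ) ζ)
    (hF' : ∀ ζ ∈ Ω, F' ζ ≠ 0)
    (u : ℝ → ℝ → ℝ → ℝ)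
    (hu : ∀ x y z : ℝ,
      u x y z = Real.log (4 * a * Complex.normSq ((z : ℂ) + h (x + y * Complex.I)) *
        ‖F' (x + y * Complex.I)‖^2 /
        (1 + a * ‖F (x + y * Complex.I)‖^2)^2))
    (κ : ℝ → ℝ → ℝ → ℝ)
    (hκ : ∀ x y z : ℝ,
      κ x y z = (Complex.I * (h (x + y * Complex.I) - (starRingEnd ℂ) (h (x + y * Complex.I))) /
        (2 * (((z : ℂ) + h (x + y * Complex.I)) *
          ((z : ℂ) + (starRingEnd ℂ) (h (x + y * Complex.I)))))).re) :
    ∀ x y z : ℝ, (x + y * Complex.I) ∈ Ω → (z : ℂ) + h (x + y * Complex.I) ≠ 0 →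
      pdx κ x y z = -(1/2) * pdz (pdy u) x y z ∧
      pdy κ x y z = (1/2) * pdz (pdx u) x y z ∧
      pdz κ x y z + pdz u x y z * κ x y z = 0 := by
  -- real form of κ
  have hκ' : ∀ x y z : ℝ, κ x y z
      = -(h ((x:ℂ) + (y:ℂ)*Complex.I)).im / Complex.normSq ((z:ℂ) + h ((x:ℂ)+(y:ℂ)*Complex.I)) := by
    intro x y z
    rw [hκ]
    have hc : ((z : ℂ) + (starRingEnd ℂ) (h (↑x + ↑y * Complex.I)))
        = (starRingEnd ℂ) ((z:ℂ) + h (↑x + ↑y * Complex.I)) := by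
      simp [map_add, Complex.conj_ofReal]
    rw [hc, Complex.mul_conj]
    have h1 : Complex.I * (h (↑x + ↑y*Complex.I) - (starRingEnd ℂ) (h (↑x + ↑y*Complex.I)))
        = ((-2 * (h (↑x + ↑y*Complex.I)).im : ℝ) : ℂ) := by
      rw [Complex.sub_conj]
      push_cast
      ring_nf
      rw [Complex.I_sq]
      ring
    rw [h1]
    rw [show (2 : ℂ) * ((Complex.normSq ((z:ℂ) + h (↑x + ↑y*Complex.I)) : ℝ) : ℂ)
        = ((2 * Complex.normSq ((z:ℂ) + h (↑x + ↑y*Complex.I)) : ℝ) : ℂ) by push_cast; ring]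
    rw [← Complex.ofReal_div, Complex.ofReal_re]
    rw [neg_mul, neg_div, neg_div, mul_div_mul_left _ _ (two_ne_zero)]
  -- split of u into a z-part and a (x,y)-part
  have husplit : ∀ x' y' z' : ℝ, ((x':ℂ)+(y':ℂ)*Complex.I) ∈ Ω →
      ((z':ℂ)) + h ((x':ℂ)+(y':ℂ)*Complex.I) ≠ 0 →
      u x' y' z' = Real.log (Complex.normSq ((z':ℂ) + h ((x':ℂ)+(y':ℂ)*Complex.I))) +
        Real.log (4*a*Complex.normSq (F' ((x':ℂ)+(y':ℂ)*Complex.I))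
          /(1+a*Complex.normSq (F ((x':ℂ)+(y':ℂ)*Complex.I)))^2) := by
    intro x' y' z' hm hwz
    have h5 : 0 < Complex.normSq (F' ((x':ℂ)+(y':ℂ)*Complex.I)) :=
      Complex.normSq_pos.mpr (hF' _ hm)
    have h6 : (0:ℝ) < 1 + a*Complex.normSq (F ((x':ℂ)+(y':ℂ)*Complex.I)) := by
      nlinarith [Complex.normSq_nonneg (F ((x':ℂ)+(y':ℂ)*Complex.I))]
    have h7 : 0 < Complex.normSq ((z':ℂ) + h ((x':ℂ)+(y':ℂ)*Complex.I)) :=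
      Complex.normSq_pos.mpr hwz
    rw [hu]
    rw [show 4*a*Complex.normSq ((z':ℂ) + h ((x':ℂ)+(y':ℂ)*Complex.I))
          *‖F' ((x':ℂ)+(y':ℂ)*Complex.I)‖^2
          /(1+a*‖F ((x':ℂ)+(y':ℂ)*Complex.I)‖^2)^2
        = Complex.normSq ((z':ℂ) + h ((x':ℂ)+(y':ℂ)*Complex.I))
          * (4*a*Complex.normSq (F' ((x':ℂ)+(y':ℂ)*Complex.I))
            /(1+a*Complex.normSq (F ((x':ℂ)+(y':ℂ)*Complex.I)))^2) from by
      rw [Complex.sq_norm, Complex.sq_norm]; ring]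
    exact Real.log_mul h7.ne'
      (ne_of_gt (div_pos (mul_pos (by linarith) h5) (pow_pos h6 2)))
  have hFdiff : DifferentiableOn ℂ F Ω := fun w hw => (hF w hw).differentiableAt.differentiableWithinAt
  have hFan : AnalyticOnNhd ℂ (deriv F) Ω := (hFdiff.analyticOnNhd hΩ).deriv
  intro x y z hmem hw
  -- basic derivative facts
  have hhd : DifferentiableAt ℂ h ((x:ℂ)+(y:ℂ)*Complex.I) := hh.differentiableAt (hΩ.mem_nhds hmem)
  have hH : HasDerivAt h (deriv h ((x:ℂ)+(y:ℂ)*Complex.I)) ((x:ℂ)+(y:ℂ)*Complex.I) := hhd.hasDerivAt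
  have hix : HasDerivAt (fun t : ℝ => ((t:ℂ) + (y:ℂ)*Complex.I)) 1 x := by
    simpa using (Complex.ofRealCLM.hasDerivAt (x := x)).add_const ((y:ℂ)*Complex.I)
  have hiy : HasDerivAt (fun s : ℝ => ((x:ℂ) + (s:ℂ)*Complex.I)) Complex.I y := by
    simpa using ((Complex.ofRealCLM.hasDerivAt (x := y)).mul_const Complex.I).const_add (x:ℂ)
  have hdx : HasDerivAt (fun t : ℝ => h ((t:ℂ) + (y:ℂ)*Complex.I))
      (deriv h ((x:ℂ)+(y:ℂ)*Complex.I)) x := by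
    simpa [Function.comp_def] using hH.scomp x hix
  have hdy : HasDerivAt (fun s : ℝ => h ((x:ℂ) + (s:ℂ)*Complex.I))
      (Complex.I * deriv h ((x:ℂ)+(y:ℂ)*Complex.I)) y := by
    simpa [Function.comp_def, smul_eq_mul] using hH.scomp y hiy
  have hgz : HasDerivAt (fun t : ℝ => ((t:ℂ) + h ((x:ℂ)+(y:ℂ)*Complex.I))) 1 z := by
    simpa using (Complex.ofRealCLM.hasDerivAt (x := z)).add_const (h ((x:ℂ)+(y:ℂ)*Complex.I))
  have hDpos : 0 < Complex.normSq ((z:ℂ) + h ((x:ℂ)+(y:ℂ)*Complex.I)) := Complex.normSq_pos.mpr hw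
  have hNz : HasDerivAt (fun t : ℝ => Complex.normSq ((t:ℂ) + h ((x:ℂ)+(y:ℂ)*Complex.I)))
      (2*(z+(h ((x:ℂ)+(y:ℂ)*Complex.I)).re)) z := by
    have h1 := hasDerivAt_normSq_comp hgz
    convert h1 using 1
    simp
  -- eventual nonvanishing in z
  have hcontz : Continuous fun t : ℝ => ((t:ℂ) + h ((x:ℂ)+(y:ℂ)*Complex.I)) := by
    exact (Complex.continuous_ofReal).add continuous_const
  have evz : ∀ᶠ t : ℝ in nhds z, ((t:ℂ) + h ((x:ℂ)+(y:ℂ)*Complex.I)) ≠ 0 :=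
    hcontz.continuousAt.eventually_ne hw
  -- pdz u
  have hpdzu : pdz u x y z
      = 2*(z+(h ((x:ℂ)+(y:ℂ)*Complex.I)).re) / Complex.normSq ((z:ℂ) + h ((x:ℂ)+(y:ℂ)*Complex.I)) := by
    have hev : (fun t => u x y t) =ᶠ[nhds z] fun t =>
        Real.log (Complex.normSq ((t:ℂ) + h ((x:ℂ)+(y:ℂ)*Complex.I))) +
        Real.log (4*a*Complex.normSq (F' ((x:ℂ)+(y:ℂ)*Complex.I))
          /(1+a*Complex.normSq (F ((x:ℂ)+(y:ℂ)*Complex.I)))^2) := by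
      filter_upwards [evz] with t ht
      exact husplit x y t hmem ht
    unfold pdz
    rw [Filter.EventuallyEq.deriv_eq hev]
    exact ((hNz.log hDpos.ne').add_const _).deriv
  -- differentiability of the (x,y)-part G in the y-direction
  have hF'ev : F' =ᶠ[nhds ((x:ℂ)+(y:ℂ)*Complex.I)] deriv F := by
    filter_upwards [hΩ.mem_nhds hmem] with w hw'
    exact ((hF w hw').deriv).symm
  have hF'diffAt : DifferentiableAt ℂ F' ((x:ℂ)+(y:ℂ)*Complex.I) :=
    (hFan _ hmem).differentiableAt.congr_of_eventuallyEq hF'ev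
  have hFdiffAt : DifferentiableAt ℂ F ((x:ℂ)+(y:ℂ)*Complex.I) := (hF _ hmem).differentiableAt
  have hcompF'y : DifferentiableAt ℝ (fun s : ℝ => F' ((x:ℂ)+(s:ℂ)*Complex.I)) y :=
    (hF'diffAt.restrictScalars ℝ).comp y hiy.differentiableAt
  have hcompFy : DifferentiableAt ℝ (fun s : ℝ => F ((x:ℂ)+(s:ℂ)*Complex.I)) y :=
    (hFdiffAt.restrictScalars ℝ).comp y hiy.differentiableAt
  have hcompF'x : DifferentiableAt ℝ (fun t : ℝ => F' ((t:ℂ)+(y:ℂ)*Complex.I)) x :=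
    (hF'diffAt.restrictScalars ℝ).comp x hix.differentiableAt
  have hcompFx : DifferentiableAt ℝ (fun t : ℝ => F ((t:ℂ)+(y:ℂ)*Complex.I)) x :=
    (hFdiffAt.restrictScalars ℝ).comp x hix.differentiableAt
  have h5 : 0 < Complex.normSq (F' ((x:ℂ)+(y:ℂ)*Complex.I)) :=
    Complex.normSq_pos.mpr (hF' _ hmem)
  have h6 : (0:ℝ) < 1 + a*Complex.normSq (F ((x:ℂ)+(y:ℂ)*Complex.I)) := by
    nlinarith [Complex.normSq_nonneg (F ((x:ℂ)+(y:ℂ)*Complex.I))]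
  have hGdiffy : DifferentiableAt ℝ (fun s : ℝ =>
      Real.log (4*a*Complex.normSq (F' ((x:ℂ)+(s:ℂ)*Complex.I))
        /(1+a*Complex.normSq (F ((x:ℂ)+(s:ℂ)*Complex.I)))^2)) y := by
    have hns1 : DifferentiableAt ℝ (fun s : ℝ => Complex.normSq (F' ((x:ℂ)+(s:ℂ)*Complex.I))) y :=
      (hasDerivAt_normSq_comp hcompF'y.hasDerivAt).differentiableAt
    have hns2 : DifferentiableAt ℝ (fun s : ℝ => Complex.normSq (F ((x:ℂ)+(s:ℂ)*Complex.I))) y :=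
      (hasDerivAt_normSq_comp hcompFy.hasDerivAt).differentiableAt
    have hq : DifferentiableAt ℝ (fun s : ℝ => 4*a*Complex.normSq (F' ((x:ℂ)+(s:ℂ)*Complex.I))
        /(1+a*Complex.normSq (F ((x:ℂ)+(s:ℂ)*Complex.I)))^2) y :=
      (hns1.const_mul (4*a)).div (((hns2.const_mul a).const_add 1).pow 2) (pow_pos h6 2).ne'
    exact hq.log (ne_of_gt (div_pos (mul_pos (by linarith) h5) (pow_pos h6 2)))
  have hGdiffx : DifferentiableAt ℝ (fun t : ℝ =>
      Real.log (4*a*Complex.normSq (F' ((t:ℂ)+(y:ℂ)*Complex.I))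
        /(1+a*Complex.normSq (F ((t:ℂ)+(y:ℂ)*Complex.I)))^2)) x := by
    have hns1 : DifferentiableAt ℝ (fun t : ℝ => Complex.normSq (F' ((t:ℂ)+(y:ℂ)*Complex.I))) x :=
      (hasDerivAt_normSq_comp hcompF'x.hasDerivAt).differentiableAt
    have hns2 : DifferentiableAt ℝ (fun t : ℝ => Complex.normSq (F ((t:ℂ)+(y:ℂ)*Complex.I))) x :=
      (hasDerivAt_normSq_comp hcompFx.hasDerivAt).differentiableAt
    have hq : DifferentiableAt ℝ (fun t : ℝ => 4*a*Complex.normSq (F' ((t:ℂ)+(y:ℂ)*Complex.I))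
        /(1+a*Complex.normSq (F ((t:ℂ)+(y:ℂ)*Complex.I)))^2) x :=
      (hns1.const_mul (4*a)).div (((hns2.const_mul a).const_add 1).pow 2) (pow_pos h6 2).ne'
    exact hq.log (ne_of_gt (div_pos (mul_pos (by linarith) h5) (pow_pos h6 2)))
  -- pdy u at points (x, y, t)
  have hpdyu : ∀ t : ℝ, ((t:ℂ) + h ((x:ℂ)+(y:ℂ)*Complex.I)) ≠ 0 →
      pdy u x y t = (2*(t+(h ((x:ℂ)+(y:ℂ)*Complex.I)).re)*(-(deriv h ((x:ℂ)+(y:ℂ)*Complex.I)).im)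
          + 2*(h ((x:ℂ)+(y:ℂ)*Complex.I)).im*(deriv h ((x:ℂ)+(y:ℂ)*Complex.I)).re)
          / Complex.normSq ((t:ℂ) + h ((x:ℂ)+(y:ℂ)*Complex.I))
        + deriv (fun s : ℝ => Real.log (4*a*Complex.normSq (F' ((x:ℂ)+(s:ℂ)*Complex.I))
            /(1+a*Complex.normSq (F ((x:ℂ)+(s:ℂ)*Complex.I)))^2)) y := by
    intro t ht
    have hev : (fun s => u x s t) =ᶠ[nhds y] fun s =>
        Real.log (Complex.normSq ((t:ℂ) + h ((x:ℂ)+(s:ℂ)*Complex.I))) +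
        Real.log (4*a*Complex.normSq (F' ((x:ℂ)+(s:ℂ)*Complex.I))
          /(1+a*Complex.normSq (F ((x:ℂ)+(s:ℂ)*Complex.I)))^2) := by
      have hc : Continuous fun s : ℝ => ((x:ℂ)+(s:ℂ)*Complex.I) := by
        exact continuous_const.add ((Complex.continuous_ofReal).mul continuous_const)
      have e1 : ∀ᶠ s : ℝ in nhds y, ((x:ℂ)+(s:ℂ)*Complex.I) ∈ Ω :=
        hc.continuousAt.preimage_mem_nhds (hΩ.mem_nhds hmem)
      have e2 : ∀ᶠ s : ℝ in nhds y, ((t:ℂ) + h ((x:ℂ)+(s:ℂ)*Complex.I)) ≠ 0 := by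
        have hc2 : ContinuousAt (fun s : ℝ => ((t:ℂ) + h ((x:ℂ)+(s:ℂ)*Complex.I))) y :=
          continuousAt_const.add hdy.continuousAt
        exact hc2.eventually_ne ht
      filter_upwards [e1, e2] with s hs1 hs2
      exact husplit x s t hs1 hs2
    have hlog : HasDerivAt (fun s : ℝ =>
        Real.log (Complex.normSq ((t:ℂ) + h ((x:ℂ)+(s:ℂ)*Complex.I))))
        ((2*(t+(h ((x:ℂ)+(y:ℂ)*Complex.I)).re)*(-(deriv h ((x:ℂ)+(y:ℂ)*Complex.I)).im)
          + 2*(h ((x:ℂ)+(y:ℂ)*Complex.I)).im*(deriv h ((x:ℂ)+(y:ℂ)*Complex.I)).re)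
          / Complex.normSq ((t:ℂ) + h ((x:ℂ)+(y:ℂ)*Complex.I))) y := by
      have hns := hasDerivAt_normSq_comp (hdy.const_add (t:ℂ))
      have hl := hns.log (Complex.normSq_pos.mpr ht).ne'
      convert hl using 1
      simp [Complex.mul_re, Complex.mul_im]
    unfold pdy
    rw [Filter.EventuallyEq.deriv_eq hev]
    rw [deriv_fun_add hlog.differentiableAt hGdiffy]
    congr 1
    exact hlog.deriv
  -- pdx u at points (x, y, t)
  have hpdxu : ∀ t : ℝ, ((t:ℂ) + h ((x:ℂ)+(y:ℂ)*Complex.I)) ≠ 0 →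
      pdx u x y t = (2*(t+(h ((x:ℂ)+(y:ℂ)*Complex.I)).re)*((deriv h ((x:ℂ)+(y:ℂ)*Complex.I)).re)
          + 2*(h ((x:ℂ)+(y:ℂ)*Complex.I)).im*(deriv h ((x:ℂ)+(y:ℂ)*Complex.I)).im)
          / Complex.normSq ((t:ℂ) + h ((x:ℂ)+(y:ℂ)*Complex.I))
        + deriv (fun s : ℝ => Real.log (4*a*Complex.normSq (F' ((s:ℂ)+(y:ℂ)*Complex.I))
            /(1+a*Complex.normSq (F ((s:ℂ)+(y:ℂ)*Complex.I)))^2)) x := by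
    intro t ht
    have hev : (fun s => u s y t) =ᶠ[nhds x] fun s =>
        Real.log (Complex.normSq ((t:ℂ) + h ((s:ℂ)+(y:ℂ)*Complex.I))) +
        Real.log (4*a*Complex.normSq (F' ((s:ℂ)+(y:ℂ)*Complex.I))
          /(1+a*Complex.normSq (F ((s:ℂ)+(y:ℂ)*Complex.I)))^2) := by
      have hc : Continuous fun s : ℝ => ((s:ℂ)+(y:ℂ)*Complex.I) := by
        exact (Complex.continuous_ofReal).add continuous_const
      have e1 : ∀ᶠ s : ℝ in nhds x, ((s:ℂ)+(y:ℂ)*Complex.I) ∈ Ω :=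
        hc.continuousAt.preimage_mem_nhds (hΩ.mem_nhds hmem)
      have e2 : ∀ᶠ s : ℝ in nhds x, ((t:ℂ) + h ((s:ℂ)+(y:ℂ)*Complex.I)) ≠ 0 := by
        have hc2 : ContinuousAt (fun s : ℝ => ((t:ℂ) + h ((s:ℂ)+(y:ℂ)*Complex.I))) x :=
          continuousAt_const.add hdx.continuousAt
        exact hc2.eventually_ne ht
      filter_upwards [e1, e2] with s hs1 hs2
      exact husplit s y t hs1 hs2
    have hlog : HasDerivAt (fun s : ℝ =>
        Real.log (Complex.normSq ((t:ℂ) + h ((s:ℂ)+(y:ℂ)*Complex.I))))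
        ((2*(t+(h ((x:ℂ)+(y:ℂ)*Complex.I)).re)*((deriv h ((x:ℂ)+(y:ℂ)*Complex.I)).re)
          + 2*(h ((x:ℂ)+(y:ℂ)*Complex.I)).im*(deriv h ((x:ℂ)+(y:ℂ)*Complex.I)).im)
          / Complex.normSq ((t:ℂ) + h ((x:ℂ)+(y:ℂ)*Complex.I))) x := by
      have hns := hasDerivAt_normSq_comp (hdx.const_add (t:ℂ))
      have hl := hns.log (Complex.normSq_pos.mpr ht).ne'
      convert hl using 1
      simp
    unfold pdx
    rw [Filter.EventuallyEq.deriv_eq hev]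
    rw [deriv_fun_add hlog.differentiableAt hGdiffx]
    congr 1
    exact hlog.deriv
  have hDeq : Complex.normSq ((z:ℂ) + h ((x:ℂ)+(y:ℂ)*Complex.I)) = (z+(h ((x:ℂ)+(y:ℂ)*Complex.I)).re)^2+((h ((x:ℂ)+(y:ℂ)*Complex.I)).im)^2 := by
    simp [Complex.normSq_apply]
    ring
  have hD0' : (z+(h ((x:ℂ)+(y:ℂ)*Complex.I)).re)^2+((h ((x:ℂ)+(y:ℂ)*Complex.I)).im)^2 ≠ 0 := hDeq ▸ hDpos.ne'
  -- mixed partial z of pdy u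
  have hA1 : HasDerivAt (fun t : ℝ => 2*(t+(h ((x:ℂ)+(y:ℂ)*Complex.I)).re)*(-(deriv h ((x:ℂ)+(y:ℂ)*Complex.I)).im) + 2*(h ((x:ℂ)+(y:ℂ)*Complex.I)).im*(deriv h ((x:ℂ)+(y:ℂ)*Complex.I)).re) (2*(-(deriv h ((x:ℂ)+(y:ℂ)*Complex.I)).im)) z := by
    simpa using ((((hasDerivAt_id z).add_const ((h ((x:ℂ)+(y:ℂ)*Complex.I)).re)).const_mul 2).mul_const (-(deriv h ((x:ℂ)+(y:ℂ)*Complex.I)).im)).add_const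
      (2*(h ((x:ℂ)+(y:ℂ)*Complex.I)).im*(deriv h ((x:ℂ)+(y:ℂ)*Complex.I)).re)
  have hmix1 : pdz (pdy u) x y z
      = (2*(-(deriv h ((x:ℂ)+(y:ℂ)*Complex.I)).im)*(Complex.normSq ((z:ℂ) + h ((x:ℂ)+(y:ℂ)*Complex.I))) - (2*(z+(h ((x:ℂ)+(y:ℂ)*Complex.I)).re)*(-(deriv h ((x:ℂ)+(y:ℂ)*Complex.I)).im)+2*(h ((x:ℂ)+(y:ℂ)*Complex.I)).im*(deriv h ((x:ℂ)+(y:ℂ)*Complex.I)).re)*(2*(z+(h ((x:ℂ)+(y:ℂ)*Complex.I)).re)))/(Complex.normSq ((z:ℂ) + h ((x:ℂ)+(y:ℂ)*Complex.I)))^2 := by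
    have hev : (fun t => pdy u x y t) =ᶠ[nhds z] fun t =>
        (2*(t+(h ((x:ℂ)+(y:ℂ)*Complex.I)).re)*(-(deriv h ((x:ℂ)+(y:ℂ)*Complex.I)).im) + 2*(h ((x:ℂ)+(y:ℂ)*Complex.I)).im*(deriv h ((x:ℂ)+(y:ℂ)*Complex.I)).re) / Complex.normSq ((t:ℂ) + h ((x:ℂ)+(y:ℂ)*Complex.I))
        + deriv (fun s : ℝ => Real.log (4*a*Complex.normSq (F' ((x:ℂ)+(s:ℂ)*Complex.I))
            /(1+a*Complex.normSq (F ((x:ℂ)+(s:ℂ)*Complex.I)))^2)) y := by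
      filter_upwards [evz] with t ht
      exact hpdyu t ht
    unfold pdz
    rw [Filter.EventuallyEq.deriv_eq hev]
    exact ((hA1.div hNz hDpos.ne').add_const _).deriv
  have hB1 : HasDerivAt (fun t : ℝ => 2*(t+(h ((x:ℂ)+(y:ℂ)*Complex.I)).re)*((deriv h ((x:ℂ)+(y:ℂ)*Complex.I)).re) + 2*(h ((x:ℂ)+(y:ℂ)*Complex.I)).im*(deriv h ((x:ℂ)+(y:ℂ)*Complex.I)).im) (2*((deriv h ((x:ℂ)+(y:ℂ)*Complex.I)).re)) z := by
    simpa using ((((hasDerivAt_id z).add_const ((h ((x:ℂ)+(y:ℂ)*Complex.I)).re)).const_mul 2).mul_const ((deriv h ((x:ℂ)+(y:ℂ)*Complex.I)).re)).add_const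
      (2*(h ((x:ℂ)+(y:ℂ)*Complex.I)).im*(deriv h ((x:ℂ)+(y:ℂ)*Complex.I)).im)
  have hmix2 : pdz (pdx u) x y z
      = (2*((deriv h ((x:ℂ)+(y:ℂ)*Complex.I)).re)*(Complex.normSq ((z:ℂ) + h ((x:ℂ)+(y:ℂ)*Complex.I))) - (2*(z+(h ((x:ℂ)+(y:ℂ)*Complex.I)).re)*((deriv h ((x:ℂ)+(y:ℂ)*Complex.I)).re)+2*(h ((x:ℂ)+(y:ℂ)*Complex.I)).im*(deriv h ((x:ℂ)+(y:ℂ)*Complex.I)).im)*(2*(z+(h ((x:ℂ)+(y:ℂ)*Complex.I)).re)))/(Complex.normSq ((z:ℂ) + h ((x:ℂ)+(y:ℂ)*Complex.I)))^2 := by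
    have hev : (fun t => pdx u x y t) =ᶠ[nhds z] fun t =>
        (2*(t+(h ((x:ℂ)+(y:ℂ)*Complex.I)).re)*((deriv h ((x:ℂ)+(y:ℂ)*Complex.I)).re) + 2*(h ((x:ℂ)+(y:ℂ)*Complex.I)).im*(deriv h ((x:ℂ)+(y:ℂ)*Complex.I)).im) / Complex.normSq ((t:ℂ) + h ((x:ℂ)+(y:ℂ)*Complex.I))
        + deriv (fun s : ℝ => Real.log (4*a*Complex.normSq (F' ((s:ℂ)+(y:ℂ)*Complex.I))
            /(1+a*Complex.normSq (F ((s:ℂ)+(y:ℂ)*Complex.I)))^2)) x := by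
      filter_upwards [evz] with t ht
      exact hpdxu t ht
    unfold pdz
    rw [Filter.EventuallyEq.deriv_eq hev]
    exact ((hB1.div hNz hDpos.ne').add_const _).deriv
  -- derivatives of κ
  have hκx : HasDerivAt (fun t : ℝ => κ t y z)
      (((-(deriv h ((x:ℂ)+(y:ℂ)*Complex.I)).im)*(Complex.normSq ((z:ℂ) + h ((x:ℂ)+(y:ℂ)*Complex.I))) - (-((h ((x:ℂ)+(y:ℂ)*Complex.I)).im))*(2*(z+(h ((x:ℂ)+(y:ℂ)*Complex.I)).re)*((deriv h ((x:ℂ)+(y:ℂ)*Complex.I)).re) + 2*(h ((x:ℂ)+(y:ℂ)*Complex.I)).im*(deriv h ((x:ℂ)+(y:ℂ)*Complex.I)).im))/(Complex.normSq ((z:ℂ) + h ((x:ℂ)+(y:ℂ)*Complex.I)))^2) x := by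
    rw [show (fun t : ℝ => κ t y z) = fun t : ℝ => -(h ((t:ℂ)+(y:ℂ)*Complex.I)).im
        / Complex.normSq ((z:ℂ) + h ((t:ℂ)+(y:ℂ)*Complex.I)) from funext fun t => hκ' t y z]
    have hnum : HasDerivAt (fun t : ℝ => -(h ((t:ℂ)+(y:ℂ)*Complex.I)).im) (-(deriv h ((x:ℂ)+(y:ℂ)*Complex.I)).im) x :=
      (hasDerivAt_im_comp hdx).neg
    have hden := hasDerivAt_normSq_comp (hdx.const_add (z:ℂ))
    have hd := hnum.div hden hDpos.ne'
    refine hd.congr_deriv ?_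
    simp
    try ring
  have hκy : HasDerivAt (fun s : ℝ => κ x s z)
      (((-((deriv h ((x:ℂ)+(y:ℂ)*Complex.I)).re))*(Complex.normSq ((z:ℂ) + h ((x:ℂ)+(y:ℂ)*Complex.I))) - (-((h ((x:ℂ)+(y:ℂ)*Complex.I)).im))*(2*(z+(h ((x:ℂ)+(y:ℂ)*Complex.I)).re)*(-(deriv h ((x:ℂ)+(y:ℂ)*Complex.I)).im) + 2*(h ((x:ℂ)+(y:ℂ)*Complex.I)).im*(deriv h ((x:ℂ)+(y:ℂ)*Complex.I)).re))/(Complex.normSq ((z:ℂ) + h ((x:ℂ)+(y:ℂ)*Complex.I)))^2) y := by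
    rw [show (fun s : ℝ => κ x s z) = fun s : ℝ => -(h ((x:ℂ)+(s:ℂ)*Complex.I)).im
        / Complex.normSq ((z:ℂ) + h ((x:ℂ)+(s:ℂ)*Complex.I)) from funext fun s => hκ' x s z]
    have hnum : HasDerivAt (fun s : ℝ => -(h ((x:ℂ)+(s:ℂ)*Complex.I)).im)
        (-(Complex.I * deriv h ((x:ℂ)+(y:ℂ)*Complex.I)).im) y := (hasDerivAt_im_comp hdy).neg
    have hden := hasDerivAt_normSq_comp (hdy.const_add (z:ℂ))
    have hd := hnum.div hden hDpos.ne'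
    refine hd.congr_deriv ?_
    simp [Complex.mul_re, Complex.mul_im]
    try ring
  have hκz : HasDerivAt (fun t : ℝ => κ x y t)
      ((0*(Complex.normSq ((z:ℂ) + h ((x:ℂ)+(y:ℂ)*Complex.I))) - (-((h ((x:ℂ)+(y:ℂ)*Complex.I)).im))*(2*(z+(h ((x:ℂ)+(y:ℂ)*Complex.I)).re)))/(Complex.normSq ((z:ℂ) + h ((x:ℂ)+(y:ℂ)*Complex.I)))^2) z := by
    rw [show (fun t : ℝ => κ x y t) = fun t : ℝ => -(h ((x:ℂ)+(y:ℂ)*Complex.I)).im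
        / Complex.normSq ((t:ℂ) + h ((x:ℂ)+(y:ℂ)*Complex.I)) from funext fun t => hκ' x y t]
    exact (hasDerivAt_const z (-((h ((x:ℂ)+(y:ℂ)*Complex.I)).im))).div hNz hDpos.ne'
  have e1 : pdx κ x y z = ((-(deriv h ((x:ℂ)+(y:ℂ)*Complex.I)).im)*(Complex.normSq ((z:ℂ) + h ((x:ℂ)+(y:ℂ)*Complex.I))) - (-((h ((x:ℂ)+(y:ℂ)*Complex.I)).im))*(2*(z+(h ((x:ℂ)+(y:ℂ)*Complex.I)).re)*((deriv h ((x:ℂ)+(y:ℂ)*Complex.I)).re) + 2*(h ((x:ℂ)+(y:ℂ)*Complex.I)).im*(deriv h ((x:ℂ)+(y:ℂ)*Complex.I)).im))/(Complex.normSq ((z:ℂ) + h ((x:ℂ)+(y:ℂ)*Complex.I)))^2 := by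
    unfold pdx; exact hκx.deriv
  have e2 : pdy κ x y z = ((-((deriv h ((x:ℂ)+(y:ℂ)*Complex.I)).re))*(Complex.normSq ((z:ℂ) + h ((x:ℂ)+(y:ℂ)*Complex.I))) - (-((h ((x:ℂ)+(y:ℂ)*Complex.I)).im))*(2*(z+(h ((x:ℂ)+(y:ℂ)*Complex.I)).re)*(-(deriv h ((x:ℂ)+(y:ℂ)*Complex.I)).im) + 2*(h ((x:ℂ)+(y:ℂ)*Complex.I)).im*(deriv h ((x:ℂ)+(y:ℂ)*Complex.I)).re))/(Complex.normSq ((z:ℂ) + h ((x:ℂ)+(y:ℂ)*Complex.I)))^2 := by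
    unfold pdy; exact hκy.deriv
  have e3 : pdz κ x y z = (0*(Complex.normSq ((z:ℂ) + h ((x:ℂ)+(y:ℂ)*Complex.I))) - (-((h ((x:ℂ)+(y:ℂ)*Complex.I)).im))*(2*(z+(h ((x:ℂ)+(y:ℂ)*Complex.I)).re)))/(Complex.normSq ((z:ℂ) + h ((x:ℂ)+(y:ℂ)*Complex.I)))^2 := by
    unfold pdz; exact hκz.deriv
  refine ⟨?_, ?_, ?_⟩
  · rw [e1, hmix1, hDeq]
    field_simp
    ring
  · rw [e2, hmix2, hDeq]
    field_simp
    ring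
  · rw [e3, hpdzu, hκ' x y z, hDeq]
    field_simp
    ring
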